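/- Let S be the smallest set of functions ℝ → ℝ containing a polynomial function g₁ of degree at least 2 and g₂(t) = 1 - t/2, and closed under pointwise addition and composition. Then every polynomial function ℝ → ℝ belongs to the closure of S under uniform convergence on compact sets. -/

import Mathlib

open Filter Metric Polynomial



def closT (S : Set (ℝ → ℝ)) : Set (ℝ → ℝ) :=
  {f | ∃ F : ℕ → ℝ → ℝ, (∀ n, F n ∈ S) ∧
    ∀ K : Set ℝ, IsCompact K → TendstoUniformlyOn F f Filter.atTop K}

lemma subset_closT (S : Set (ℝ → ℝ)) : S ⊆ closT S := by
  intro f hf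
  refine ⟨fun _ => f, fun _ => hf, fun K _ => ?_⟩
  rw [Metric.tendstoUniformlyOn_iff]
  intro ε hε
  filter_upwards with n x _
  simpa using hε

lemma closT_add {S : Set (ℝ → ℝ)} (hadd : ∀ f ∈ S, ∀ h ∈ S, (f + h) ∈ S)
    {f g : ℝ → ℝ} (hf : f ∈ closT S) (hg : g ∈ closT S) :
    (fun x => f x + g x) ∈ closT S := by
  obtain ⟨F, hFS, hF⟩ := hf
  obtain ⟨G, hGS, hG⟩ := hg
  refine ⟨fun n => F n + G n, fun n => hadd _ (hFS n) _ (hGS n), fun K hK => ?_⟩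
  rw [Metric.tendstoUniformlyOn_iff]
  intro ε hε
  filter_upwards [Metric.tendstoUniformlyOn_iff.1 (hF K hK) (ε/2) (by linarith),
    Metric.tendstoUniformlyOn_iff.1 (hG K hK) (ε/2) (by linarith)] with n h1 h2 x hx
  have := h1 x hx
  have := h2 x hx
  simp only [Pi.add_apply, Real.dist_eq] at *
  have : |f x + g x - (F n x + G n x)| ≤ |f x - F n x| + |g x - G n x| := by
    have := abs_add_le (f x - F n x) (g x - G n x); rwa [show f x - F n x + (g x - G n x) = f x + g x - (F n x + G n x) by ring] at this
  linarith [h1 x hx, h2 x hx]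

lemma closT_comp {S : Set (ℝ → ℝ)} (hcomp : ∀ f ∈ S, ∀ h ∈ S, (f ∘ h) ∈ S)
    {f g : ℝ → ℝ} (hf : f ∈ closT S) (hg : g ∈ closT S)
    (hfc : Continuous f) (hgc : Continuous g) :
    (fun x => f (g x)) ∈ closT S := by
  obtain ⟨F, hFS, hF⟩ := hf
  obtain ⟨G, hGS, hG⟩ := hg
  refine ⟨fun n => F n ∘ G n, fun n => hcomp _ (hFS n) _ (hGS n), fun K hK => ?_⟩
  obtain ⟨M, hM⟩ := hK.exists_bound_of_continuousOn hgc.continuousOn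
  set K' : Set ℝ := Metric.closedBall 0 (M + 1) with hK'
  have hK'c : IsCompact K' := isCompact_closedBall 0 (M + 1)
  have hfu : UniformContinuousOn f K' := hK'c.uniformContinuousOn_of_continuous hfc.continuousOn
  rw [Metric.tendstoUniformlyOn_iff]
  intro ε hε
  obtain ⟨δ, hδ, hδ'⟩ := Metric.uniformContinuousOn_iff.1 hfu (ε/2) (by linarith)
  have hmin : 0 < min δ 1 := lt_min hδ one_pos
  filter_upwards [Metric.tendstoUniformlyOn_iff.1 (hG K hK) (min δ 1) hmin,
    Metric.tendstoUniformlyOn_iff.1 (hF K' hK'c) (ε/2) (by linarith)] with n h1 h2 x hx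
  have hgx : g x ∈ K' := by
    simp only [hK', Metric.mem_closedBall, Real.dist_eq, sub_zero]
    have := hM x hx
    rw [Real.norm_eq_abs] at this
    linarith
  have hGx : G n x ∈ K' := by
    simp only [hK', Metric.mem_closedBall, Real.dist_eq, sub_zero]
    have h := h1 x hx
    rw [Real.dist_eq] at h
    have hgb : ‖g x‖ ≤ M := hM x hx
    rw [Real.norm_eq_abs] at hgb
    have habs : |G n x| ≤ |G n x - g x| + |g x| := by
      have h3 := abs_add_le (G n x - g x) (g x); rwa [show G n x - g x + g x = G n x by ring] at h3
    have hd : |G n x - g x| < 1 := by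
      rw [abs_sub_comm]; exact lt_of_lt_of_le h (min_le_right _ _)
    linarith
  have hd1 : dist (f (g x)) (f (G n x)) < ε/2 := by
    apply hδ' _ hgx _ hGx
    exact lt_of_lt_of_le (h1 x hx) (min_le_left _ _)
  have hd2 : dist (f (G n x)) (F n (G n x)) < ε/2 := h2 _ hGx
  calc dist (f (g x)) ((F n ∘ G n) x) ≤ dist (f (g x)) (f (G n x)) + dist (f (G n x)) (F n (G n x)) :=
        dist_triangle _ _ _
    _ < ε := by simpa using by linarith

lemma closT_limit {S : Set (ℝ → ℝ)} {f : ℕ → ℝ → ℝ} {g : ℝ → ℝ}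
    (hf : ∀ k, f k ∈ closT S)
    (hconv : ∀ K : Set ℝ, IsCompact K → TendstoUniformlyOn f g Filter.atTop K) :
    g ∈ closT S := by
  choose G hGS hGc using hf
  have key : ∀ k : ℕ, ∃ n, ∀ x ∈ Metric.closedBall (0:ℝ) k,
      dist (f k x) (G k n x) < 1 / (k + 1) := by
    intro k
    have := Metric.tendstoUniformlyOn_iff.1 (hGc k _ (isCompact_closedBall (0:ℝ) k))
      (1 / (k + 1)) (by positivity)
    exact this.exists
  choose n hn using key
  refine ⟨fun k => G k (n k), fun k => hGS _ _, fun K hK => ?_⟩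
  obtain ⟨r, hr⟩ := hK.isBounded.subset_closedBall 0
  rw [Metric.tendstoUniformlyOn_iff]
  intro ε hε
  have h2 : Tendsto (fun k : ℕ => 1 / ((k:ℝ) + 1)) atTop (nhds 0) :=
    tendsto_one_div_add_atTop_nhds_zero_nat
  filter_upwards [Metric.tendstoUniformlyOn_iff.1 (hconv K hK) (ε/2) (by linarith),
    h2.eventually (gt_mem_nhds (by linarith : (0:ℝ) < ε/2)),
    eventually_ge_atTop ⌈r⌉₊] with k h1 hsmall hkr x hx
  have hxball : x ∈ Metric.closedBall (0:ℝ) k := by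
    have : x ∈ Metric.closedBall (0:ℝ) r := hr hx
    simp only [Metric.mem_closedBall] at *
    calc dist x 0 ≤ r := this
      _ ≤ ⌈r⌉₊ := Nat.le_ceil r
      _ ≤ k := by exact_mod_cast hkr
  calc dist (g x) (G k (n k) x) ≤ dist (g x) (f k x) + dist (f k x) (G k (n k) x) :=
        dist_triangle _ _ _
    _ < ε/2 + 1/(k+1) := add_lt_add (h1 x hx) (hn k x hxball)
    _ < ε/2 + ε/2 := by linarith [hsmall]
    _ = ε := by ring


section
variable {S : Set (ℝ → ℝ)} (hS₂ : (fun t : ℝ => 1 - t / 2) ∈ S)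
  (hadd : ∀ f ∈ S, ∀ h ∈ S, (f + h) ∈ S)
  (hcomp : ∀ f ∈ S, ∀ h ∈ S, (f ∘ h) ∈ S)

include hS₂ hadd hcomp

lemma negS : (fun t : ℝ => 2 - t) ∈ S := by
  have := hadd _ hS₂ _ hS₂
  convert this using 1
  funext t; simp [Pi.add_apply]; ring

lemma idS : (fun t : ℝ => t) ∈ S := by
  have := hcomp _ (negS hS₂ hadd hcomp) _ (negS hS₂ hadd hcomp)
  convert this using 1
  funext t; simp [Function.comp]

lemma halfS : (fun t : ℝ => t / 2) ∈ S := by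
  have := hcomp _ hS₂ _ (negS hS₂ hadd hcomp)
  convert this using 1
  funext t; simp [Function.comp]; ring

lemma twoS : (fun _ : ℝ => (2:ℝ)) ∈ S := by
  have := hadd _ (negS hS₂ hadd hcomp) _ (idS hS₂ hadd hcomp)
  convert this using 1
  funext t; simp [Pi.add_apply]

lemma constS_pow : ∀ k : ℕ, (fun _ : ℝ => (2:ℝ) / 2 ^ k) ∈ S := by
  intro k
  induction k with
  | zero => simpa using twoS hS₂ hadd hcomp
  | succ k ih =>
    have := hcomp _ (halfS hS₂ hadd hcomp) _ ih
    convert this using 1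
    funext t; simp [Function.comp]; ring

lemma constS_nat : ∀ (k : ℕ) (m : ℕ), (fun _ : ℝ => (m:ℝ) / 2 ^ k) ∈ S ∨ (m:ℝ) / 2^k = 0 := by
  intro k m
  induction m with
  | zero => right; simp
  | succ m ih =>
    left
    have h1 : (fun _ : ℝ => (2:ℝ) / 2 ^ (k+1)) ∈ S := constS_pow hS₂ hadd hcomp (k+1)
    rcases ih with ih | ih
    · have := hadd _ ih _ h1
      convert this using 1
      funext t; simp [Pi.add_apply]; push_cast; ring
    · convert h1 using 1
      funext t
      have hm : (m:ℝ) = 0 := by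
        field_simp at ih; exact_mod_cast ih
      push_cast
      rw [hm]
      ring

lemma constS_zero : (fun _ : ℝ => (0:ℝ)) ∈ S := by
  have := hcomp _ (negS hS₂ hadd hcomp) _ (twoS hS₂ hadd hcomp)
  convert this using 1
  funext t; simp [Function.comp]

lemma constS_natCast (k : ℕ) (m : ℕ) : (fun _ : ℝ => (m:ℝ) / 2 ^ k) ∈ S := by
  rcases constS_nat hS₂ hadd hcomp k m with h | h
  · exact h
  · rw [show (fun _ : ℝ => (m:ℝ) / 2 ^ k) = (fun _ : ℝ => (0:ℝ)) by funext t; rw [h]]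
    exact constS_zero hS₂ hadd hcomp

lemma constS_dyadic (k : ℕ) (m : ℤ) : (fun _ : ℝ => (m:ℝ) / 2 ^ k) ∈ S := by
  rcases m with n | n
  · simpa using constS_natCast hS₂ hadd hcomp k n
  · have h1 : (fun _ : ℝ => ((n:ℝ)+1) / 2 ^ k) ∈ S := by
      have := constS_natCast hS₂ hadd hcomp k (n+1); push_cast at this; exact this
    have h2 := hadd _ (twoS hS₂ hadd hcomp) _ h1
    have h3 := hcomp _ (negS hS₂ hadd hcomp) _ h2
    convert h3 using 1
    funext t
    simp [Function.comp, Pi.add_apply, Int.negSucc_eq]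
    push_cast
    ring

end


section
variable {S : Set (ℝ → ℝ)} (hS₂ : (fun t : ℝ => 1 - t / 2) ∈ S)
  (hadd : ∀ f ∈ S, ∀ h ∈ S, (f + h) ∈ S)
  (hcomp : ∀ f ∈ S, ∀ h ∈ S, (f ∘ h) ∈ S)

include hS₂ hadd hcomp

lemma dyadic_floor_bound (c : ℝ) (k : ℕ) :
    |c - (⌊c * 2 ^ k⌋ : ℝ) / 2 ^ k| < (1/2 : ℝ) ^ k := by
  have h2k : (0:ℝ) < 2 ^ k := by positivity
  have h1 : (⌊c * 2 ^ k⌋ : ℝ) ≤ c * 2 ^ k := Int.floor_le _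
  have h2 : c * 2 ^ k < ⌊c * 2 ^ k⌋ + 1 := Int.lt_floor_add_one _
  rw [abs_lt]
  constructor
  · rw [div_pow, one_pow]
    rw [neg_lt, neg_sub]
    rw [div_sub' (ne_of_gt h2k), div_lt_div_iff₀ h2k h2k]
    nlinarith
  · rw [div_pow, one_pow]
    rw [sub_lt_iff_lt_add, ← add_div, lt_div_iff₀ h2k]
    nlinarith

lemma half_pow_small {ε : ℝ} (hε : 0 < ε) : ∀ᶠ k : ℕ in atTop, (1/2:ℝ)^k < ε := by
  have h : Filter.Tendsto (fun k : ℕ => (1/2:ℝ)^k) atTop (nhds 0) :=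
    tendsto_pow_atTop_nhds_zero_of_lt_one (by norm_num) (by norm_num)
  exact h.eventually (gt_mem_nhds hε)

lemma constT (c : ℝ) : (fun _ : ℝ => c) ∈ closT S := by
  apply closT_limit (f := fun k => fun _ : ℝ => (⌊c * 2 ^ k⌋ : ℝ) / 2 ^ k)
  · intro k
    exact subset_closT S (constS_dyadic hS₂ hadd hcomp k _)
  · intro K _
    rw [Metric.tendstoUniformlyOn_iff]
    intro ε hε
    filter_upwards [half_pow_small hS₂ hadd hcomp hε] with k hk x _
    rw [Real.dist_eq]
    exact lt_trans (dyadic_floor_bound hS₂ hadd hcomp c k) hk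

lemma smulT {f : ℝ → ℝ} (hf : f ∈ closT S) (hfc : Continuous f) (c : ℝ) :
    (fun x => c * f x) ∈ closT S := by
  have hhalfpow : ∀ k : ℕ, (fun x => f x / 2 ^ k) ∈ closT S := by
    intro k
    induction k with
    | zero =>
      convert hf using 1
      funext x; norm_num
    | succ k ih =>
      have hc : Continuous (fun x => f x / 2 ^ k) := by fun_prop
      have := closT_comp hcomp (subset_closT S (halfS hS₂ hadd hcomp)) ih (by fun_prop) hc
      convert this using 1
      funext x; ring
  have hnat : ∀ (m : ℕ) (g : ℝ → ℝ), g ∈ closT S → (fun x => (m:ℝ) * g x) ∈ closT S := by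
    intro m
    induction m with
    | zero =>
      intro g _
      have := subset_closT S (constS_dyadic hS₂ hadd hcomp 0 0)
      convert this using 1
      funext x; simp
    | succ m ih =>
      intro g hg
      have := closT_add hadd (ih g hg) hg
      convert this using 1
      funext x; push_cast; ring
  have hneg : ∀ (g : ℝ → ℝ), g ∈ closT S → Continuous g → (fun x => -(g x)) ∈ closT S := by
    intro g hg hgc
    have h1 := closT_comp hcomp (subset_closT S (negS hS₂ hadd hcomp)) hg (by fun_prop) hgc
    have h2 := closT_add hadd h1 (subset_closT S (constS_dyadic hS₂ hadd hcomp 0 (-2)))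
    convert h2 using 1
    funext x; simp; ring
  have hint : ∀ (m : ℤ) (k : ℕ), (fun x => (m:ℝ) * (f x / 2 ^ k)) ∈ closT S := by
    intro m k
    rcases m with n | n
    · simpa using hnat n _ (hhalfpow k)
    · have h1 := hnat (n+1) _ (hhalfpow k)
      have hc1 : Continuous (fun x => ((n:ℝ)+1) * (f x / 2 ^ k)) := by fun_prop
      have h2 := hneg _ (by simpa using h1) (by simpa using hc1)
      convert h2 using 1
      funext x; simp [Int.negSucc_eq]; push_cast; ring
  apply closT_limit (f := fun j => fun x => (⌊c * 2 ^ j⌋ : ℝ) * (f x / 2 ^ j))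
  · intro j; exact hint _ j
  · intro K hK
    obtain ⟨M, hM⟩ := hK.exists_bound_of_continuousOn hfc.continuousOn
    set M' := max M 0 with hM'
    have hM'0 : 0 ≤ M' := le_max_right _ _
    rw [Metric.tendstoUniformlyOn_iff]
    intro ε hε
    have hpos : 0 < ε / (M' + 1) := by positivity
    filter_upwards [half_pow_small hS₂ hadd hcomp hpos] with j hj x hx
    have hb : |f x| ≤ M' := by
      have h := hM x hx
      rw [Real.norm_eq_abs] at h
      exact le_trans h (le_max_left _ _)
    have key : (⌊c * 2 ^ j⌋ : ℝ) * (f x / 2 ^ j) = ((⌊c * 2 ^ j⌋ : ℝ) / 2 ^ j) * f x := by ring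
    rw [Real.dist_eq, key]
    have : |c * f x - (⌊c * 2 ^ j⌋ : ℝ) / 2 ^ j * f x| = |c - (⌊c * 2 ^ j⌋ : ℝ) / 2 ^ j| * |f x| := by
      rw [← abs_mul]; ring_nf
    rw [this]
    calc |c - (⌊c * 2 ^ j⌋ : ℝ) / 2 ^ j| * |f x| ≤ (1/2:ℝ)^j * M' := by
          apply mul_le_mul (le_of_lt (dyadic_floor_bound hS₂ hadd hcomp c j)) hb (abs_nonneg _)
          positivity
      _ < ε / (M' + 1) * (M' + 1) := by
          apply lt_of_le_of_lt (b := (1/2:ℝ)^j * (M'+1))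
          · apply mul_le_mul_of_nonneg_left (by linarith) (by positivity)
          · apply mul_lt_mul_of_pos_right hj (by linarith)
      _ = ε := by field_simp

end


lemma comp_coeff (q : ℝ[X]) (m : ℕ) :
    (q.comp (X + 1)).coeff m = ∑ e ∈ Finset.range (q.natDegree + 1), q.coeff e * (e.choose m : ℝ) := by
  rw [comp_eq_sum_left, Polynomial.sum_def, finset_sum_coeff]
  rw [Finset.sum_subset supp_subset_range_natDegree_succ]
  · apply Finset.sum_congr rfl
    intro e _
    rw [coeff_C_mul, coeff_X_add_one_pow]
  · intro e _ he
    rw [notMem_support_iff.1 he]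
    simp

lemma delta_coeff_high (q : ℝ[X]) (k : ℕ) (hq : q.natDegree = k + 1) (m : ℕ) (hm : k < m) :
    (q.comp (X + 1) - q).coeff m = 0 := by
  rw [coeff_sub, comp_coeff, hq]
  rcases eq_or_lt_of_le (Nat.succ_le_of_lt hm) with h | h
  · -- m = k + 1
    rw [Finset.sum_eq_single (k+1)]
    · rw [← h, Nat.choose_self]
      simp
    · intro e he hne
      rw [Finset.mem_range] at he
      have : e < m := by omega
      rw [Nat.choose_eq_zero_of_lt this]
      simp
    · intro h'
      simp at h'
  · -- k + 1 < m
    rw [Finset.sum_eq_zero, coeff_eq_zero_of_natDegree_lt (by omega : q.natDegree < m)]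
    · simp
    · intro e he
      rw [Finset.mem_range] at he
      rw [Nat.choose_eq_zero_of_lt (by omega : e < m)]
      simp

lemma delta_coeff_top (q : ℝ[X]) (k : ℕ) (hq : q.natDegree = k + 1) :
    (q.comp (X + 1) - q).coeff k = ((k:ℝ) + 1) * q.coeff (k + 1) := by
  rw [coeff_sub, comp_coeff, hq]
  rw [Finset.sum_range_succ, Finset.sum_range_succ]
  rw [Nat.choose_self, Nat.choose_succ_self_right]
  rw [Finset.sum_eq_zero]
  · push_cast; ring
  · intro e he
    rw [Finset.mem_range] at he
    rw [Nat.choose_eq_zero_of_lt he]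
    simp

lemma delta_natDegree (q : ℝ[X]) (k : ℕ) (hq : q.natDegree = k + 1) :
    (q.comp (X + 1) - q).natDegree = k := by
  apply le_antisymm
  · exact natDegree_le_iff_coeff_eq_zero.2 fun m hm => delta_coeff_high q k hq m hm
  · apply le_natDegree_of_ne_zero
    rw [delta_coeff_top q k hq]
    have hq0 : q ≠ 0 := fun h => by simp [h] at hq
    have : q.coeff (k+1) ≠ 0 := by
      rw [← hq]
      exact mt leadingCoeff_eq_zero.1 hq0
    positivity


lemma quad_repr (r : ℝ[X]) (hr : r.natDegree = 2) :
    r = C (r.coeff 2) * X ^ 2 + C (r.coeff 1) * X + C (r.coeff 0) := by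
  apply Polynomial.ext
  intro m
  match m with
  | 0 => simp
  | 1 => simp [coeff_X]
  | 2 => simp [coeff_X]
  | (m+3) =>
    rw [coeff_eq_zero_of_natDegree_lt (by omega : r.natDegree < m + 3)]
    simp [coeff_X, coeff_X_pow]

theorem key {S : Set (ℝ → ℝ)} (g₁ : ℝ → ℝ) (p₁ : Polynomial ℝ) (hg₁ : ∀ t, g₁ t = p₁.eval t)
    (hdeg : 2 ≤ p₁.natDegree)
    (hS₁ : g₁ ∈ S) (hS₂ : (fun t : ℝ => 1 - t / 2) ∈ S)
    (hadd : ∀ f ∈ S, ∀ h ∈ S, (f + h) ∈ S)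
    (hcomp : ∀ f ∈ S, ∀ h ∈ S, (f ∘ h) ∈ S) :
    ∀ p : Polynomial ℝ, (fun t => p.eval t) ∈ closT S := by
  set P : Set (Polynomial ℝ) := {q | (fun t => q.eval t) ∈ closT S} with hP
  have hP_C : ∀ c : ℝ, C c ∈ P := by
    intro c
    have := constT hS₂ hadd hcomp c
    simp only [hP, Set.mem_setOf_eq, eval_C]
    exact this
  have hP_X : X ∈ P := by
    have := subset_closT S (idS hS₂ hadd hcomp)
    simp only [hP, Set.mem_setOf_eq, eval_X]
    exact this
  have hP_add : ∀ q ∈ P, ∀ s ∈ P, q + s ∈ P := by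
    intro q hq s hs
    have := closT_add hadd hq hs
    simp only [hP, Set.mem_setOf_eq, eval_add]
    exact this
  have hP_smul : ∀ (c : ℝ), ∀ q ∈ P, c • q ∈ P := by
    intro c q hq
    have := smulT hS₂ hadd hcomp hq (by
      have := q.continuous
      exact this) c
    simp only [hP, Set.mem_setOf_eq, eval_smul, smul_eq_mul]
    exact this
  have hP_sub : ∀ q ∈ P, ∀ s ∈ P, q - s ∈ P := by
    intro q hq s hs
    have h1 : q + (-1 : ℝ) • s ∈ P := hP_add q hq _ (hP_smul (-1) s hs)
    have : q - s = q + (-1 : ℝ) • s := by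
      rw [neg_one_smul]; ring
    rw [this]
    exact h1
  have hP_comp : ∀ q ∈ P, ∀ s ∈ P, q.comp s ∈ P := by
    intro q hq s hs
    have := closT_comp hcomp hq hs q.continuous s.continuous
    simp only [hP, Set.mem_setOf_eq, eval_comp]
    exact this
  have hp₁ : p₁ ∈ P := by
    have : (fun t => p₁.eval t) = g₁ := by funext t; rw [hg₁]
    simp only [hP, Set.mem_setOf_eq, this]
    exact subset_closT S hS₁
  have hX1 : (X + 1 : ℝ[X]) ∈ P := by
    have := hP_add X hP_X (C 1) (hP_C 1)
    rwa [C_1] at this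
  have hΔ : ∀ q ∈ P, q.comp (X + 1) - q ∈ P :=
    fun q hq => hP_sub _ (hP_comp q hq _ hX1) q hq
  -- descent to a quadratic
  have descent : ∀ n : ℕ, ∀ q ∈ P, q.natDegree = n + 2 → ∃ r ∈ P, r.natDegree = 2 := by
    intro n
    induction n with
    | zero => exact fun q hq h => ⟨q, hq, h⟩
    | succ n ih =>
      intro q hq h
      exact ih _ (hΔ q hq) (by rw [delta_natDegree q (n+2) (by omega)])
  obtain ⟨r, hrP, hr2⟩ := descent (p₁.natDegree - 2) p₁ hp₁ (by omega)
  have hr0 : r ≠ 0 := fun h => by simp [h] at hr2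
  have ha : r.coeff 2 ≠ 0 := by
    rw [← hr2]; exact mt leadingCoeff_eq_zero.1 hr0
  set a := r.coeff 2
  set b := r.coeff 1
  set c := r.coeff 0
  have hrepr := quad_repr r hr2
  -- squaring
  have hP_sq : ∀ q ∈ P, q ^ 2 ∈ P := by
    intro q hq
    have hcompq : r.comp q = C a * q ^ 2 + C b * q + C c := by
      conv_lhs => rw [hrepr]
      simp [add_comp, mul_comp, C_comp, X_comp, pow_comp]
      rfl
    have h4 : r.comp q - C b * q - C c = C a * q ^ 2 := by rw [hcompq]; ring
    have h5 : q ^ 2 = a⁻¹ • (r.comp q - C b * q - C c) := by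
      rw [h4, smul_eq_C_mul, ← mul_assoc, ← C_mul, inv_mul_cancel₀ ha, C_1, one_mul]
    rw [h5]
    apply hP_smul
    apply hP_sub
    · apply hP_sub
      · exact hP_comp r hrP q hq
      · rw [← smul_eq_C_mul]
        exact hP_smul b q hq
    · exact hP_C c
  -- multiplication
  have hP_mul : ∀ q ∈ P, ∀ s ∈ P, q * s ∈ P := by
    intro q hq s hs
    have h1 : (q + s) ^ 2 - q ^ 2 - s ^ 2 = 2 * (q * s) := by ring
    have h2 : q * s = (2 : ℝ)⁻¹ • ((q + s) ^ 2 - q ^ 2 - s ^ 2) := by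
      rw [h1, smul_eq_C_mul, ← mul_assoc, show ((2 : ℝ[X])) = C (2:ℝ) from (map_ofNat C 2).symm,
        ← C_mul, inv_mul_cancel₀ (by norm_num : (2:ℝ) ≠ 0), C_1, one_mul]
    rw [h2]
    apply hP_smul
    apply hP_sub _ (hP_sub _ (hP_sq _ (hP_add q hq s hs)) _ (hP_sq q hq)) _ (hP_sq s hs)
  -- all polynomials
  intro p
  have : p ∈ P := by
    induction p using Polynomial.induction_on with
    | C c => exact hP_C c
    | add p q hp hq => exact hP_add p hp q hq
    | monomial n a ih =>
      have : C a * X ^ (n + 1) = (C a * X ^ n) * X := by ring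
      rw [this]
      exact hP_mul _ ih _ hP_X
  exact this


theorem stmt11 (g₁ : ℝ → ℝ) (p₁ : Polynomial ℝ) (hg₁ : ∀ t, g₁ t = p₁.eval t)
    (hdeg : 2 ≤ p₁.natDegree) (S : Set (ℝ → ℝ))
    (hS₁ : g₁ ∈ S) (hS₂ : (fun t : ℝ => 1 - t / 2) ∈ S)
    (hadd : ∀ f ∈ S, ∀ h ∈ S, (f + h) ∈ S)
    (hcomp : ∀ f ∈ S, ∀ h ∈ S, (f ∘ h) ∈ S)
    (hmin : ∀ T : Set (ℝ → ℝ), g₁ ∈ T → (fun t : ℝ => 1 - t / 2) ∈ T →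
      (∀ f ∈ T, ∀ h ∈ T, (f + h) ∈ T) →
      (∀ f ∈ T, ∀ h ∈ T, (f ∘ h) ∈ T) → S ⊆ T) :
    ∀ p : Polynomial ℝ, ∃ F : ℕ → ℝ → ℝ, (∀ n, F n ∈ S) ∧
      ∀ K : Set ℝ, IsCompact K →
        TendstoUniformlyOn F (fun t => p.eval t) Filter.atTop K := by
  intro p
  exact key g₁ p₁ hg₁ hdeg hS₁ hS₂ hadd hcomp p
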